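/- arXiv:0801.0884 — 2 statements merged into one kernel-verified Lean document; each statement's English description precedes it below -/
import Mathlib

section
/- Let k ≥ 1 be an integer, let α be real with 0 < α < 1, and let s be a complex number that is not an integer ≤ 1. Then the series below converges and ζ(s, α) = Σ_{n=0}^{k−1} (n+α)^{−s} + (ζ(s) − Σ_{ℓ=1}^{k−1} ℓ^{−s}) + Σ_{n=1}^{∞} ((−α)^n / n!) · (s)_n · (ζ(s+n) − Σ_{ℓ=1}^{k−1} ℓ^{−(s+n)}), where empty sums are zero. -/
open Complex Finset HurwitzZeta

namespace HZAux
open Filter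

/-- Product `(s)(s+1)⋯(s+n-1)`. -/
noncomputable def P (s : ℂ) (n : ℕ) : ℂ := ∏ j ∈ Finset.range n, (s + j)

/-- Zeta tail: `ζ(w) - Σ_{ℓ=1}^{k-1} ℓ^{-w}`. -/
noncomputable def R (k : ℕ) (w : ℂ) : ℂ :=
  riemannZeta w - ∑ ℓ ∈ Finset.Icc 1 (k - 1), (ℓ : ℂ) ^ (-w)

/-- Term of main series. -/
noncomputable def g (k : ℕ) (α : ℝ) (n : ℕ) (s : ℂ) : ℂ :=
  (-(α : ℂ)) ^ n / (n.factorial : ℂ) * P s n * R k (s + n)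

lemma hasSum_R {k : ℕ} (hk : 1 ≤ k) {w : ℂ} (hw : 1 < w.re) :
    HasSum (fun m : ℕ => ((m + k : ℕ) : ℂ) ^ (-w)) (R k w) := by
  have hsum : Summable (fun n : ℕ => 1 / (n : ℂ) ^ w) :=
    (Complex.summable_one_div_nat_cpow).mpr hw
  have heq : ∀ n : ℕ, 1 / (n : ℂ) ^ w = (n : ℂ) ^ (-w) := by
    intro n; rw [cpow_neg, one_div]
  have hsum' : Summable (fun n : ℕ => (n : ℂ) ^ (-w)) := hsum.congr heq
  have hzeta : HasSum (fun n : ℕ => (n : ℂ) ^ (-w)) (riemannZeta w) := by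
    have := (zeta_eq_tsum_one_div_nat_cpow hw)
    rw [tsum_congr heq] at this
    exact this ▸ hsum'.hasSum
  have key : HasSum (fun m : ℕ => ((m + k : ℕ) : ℂ) ^ (-w))
      (riemannZeta w - ∑ i ∈ Finset.range k, (i : ℂ) ^ (-w)) := by
    rw [hasSum_nat_add_iff (f := fun n : ℕ => (n : ℂ) ^ (-w)) k, sub_add_cancel]
    exact hzeta
  have hr : ∑ i ∈ Finset.range k, (i : ℂ) ^ (-w) = ∑ ℓ ∈ Finset.Icc 1 (k - 1), (ℓ : ℂ) ^ (-w) := by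
    have : Finset.range k = insert 0 (Finset.Icc 1 (k - 1)) := by
      ext x; simp only [Finset.mem_range, Finset.mem_insert, Finset.mem_Icc]; omega
    rw [this, Finset.sum_insert (by simp)]
    have hw0 : -w ≠ 0 := by
      intro h; rw [neg_eq_zero] at h; rw [h] at hw; simp at hw; linarith
    rw [Nat.cast_zero, Complex.zero_cpow hw0, zero_add]
  rw [hr] at key
  exact key

lemma iteratedDeriv_cpow_shift {x : ℝ} (hx : 0 < x) (s : ℂ) (n : ℕ) :
    Set.EqOn (iteratedDeriv n (fun z : ℂ => ((x : ℂ) + z) ^ (-s)))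
      (fun z => (-1) ^ n * P s n * ((x : ℂ) + z) ^ (-s - n))
      {z : ℂ | 0 < ((x : ℂ) + z).re} := by
  have hopen : IsOpen {z : ℂ | 0 < ((x : ℂ) + z).re} :=
    isOpen_lt continuous_const ((Complex.continuous_re).comp (continuous_const.add continuous_id))
  induction n with
  | zero =>
    intro z hz
    simp [P, iteratedDeriv_zero]
  | succ n ih =>
    intro z hz
    rw [iteratedDeriv_succ]
    have hev : iteratedDeriv n (fun z : ℂ => ((x : ℂ) + z) ^ (-s)) =ᶠ[nhds z]
        (fun z => (-1) ^ n * P s n * ((x : ℂ) + z) ^ (-s - n)) :=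
      Filter.eventuallyEq_of_mem (hopen.mem_nhds hz) ih
    rw [hev.deriv_eq]
    have hslit : ((x : ℂ) + z) ∈ Complex.slitPlane := Or.inl hz
    have hd : HasDerivAt (fun w : ℂ => ((x : ℂ) + w) ^ (-s - n))
        ((-s - n) * ((x : ℂ) + z) ^ (-s - n - 1) * 1) z :=
      HasDerivAt.cpow_const ((hasDerivAt_id z).const_add (x : ℂ)) hslit
    have : HasDerivAt (fun w : ℂ => (-1) ^ n * P s n * ((x : ℂ) + w) ^ (-s - n))
        ((-1) ^ n * P s n * ((-s - n) * ((x : ℂ) + z) ^ (-s - n - 1) * 1)) z :=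
      hd.const_mul _
    rw [this.deriv]
    have hP : P s (n + 1) = P s n * (s + n) := by
      rw [P, P, Finset.prod_range_succ]
    rw [hP]
    have hexp : -s - n - 1 = -s - (n + 1 : ℕ) := by push_cast; ring
    rw [← hexp]
    ring_nf

lemma hasSum_binomial {x : ℝ} (hx : 1 ≤ x) {α : ℝ} (hα0 : 0 < α) (hα1 : α < 1) (s : ℂ) :
    HasSum (fun n : ℕ => (-(α : ℂ)) ^ n / (n.factorial : ℂ) * P s n * (x : ℂ) ^ (-(s + n)))
      (((x + α : ℝ) : ℂ) ^ (-s)) := by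
  have hball : ((α : ℂ)) ∈ Metric.ball (0 : ℂ) x := by
    simp only [Metric.mem_ball, dist_zero_right, Complex.norm_real, Real.norm_eq_abs,
      abs_of_pos hα0]
    linarith
  have hdiff : DifferentiableOn ℂ (fun z : ℂ => ((x : ℂ) + z) ^ (-s)) (Metric.ball (0 : ℂ) x) := by
    intro z hz
    have hre : 0 < ((x : ℂ) + z).re := by
      simp only [Complex.add_re, Complex.ofReal_re]
      have : |z.re| ≤ ‖z‖ := Complex.abs_re_le_norm z
      have hz' : ‖z‖ < x := by simpa [dist_zero_right] using hz
      have := abs_le.mp this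
      linarith [this.1]
    exact (((hasDerivAt_id z).const_add (x : ℂ)).cpow_const (Or.inl hre)).differentiableAt
      |>.differentiableWithinAt
  have key := Complex.hasSum_taylorSeries_on_ball hdiff hball
  have hx0 : (0 : ℝ) < x := lt_of_lt_of_le one_pos hx
  have hmem : (0 : ℂ) ∈ {z : ℂ | 0 < ((x : ℂ) + z).re} := by
    simp [hx0]
  have heval : ∀ n : ℕ, iteratedDeriv n (fun z : ℂ => ((x : ℂ) + z) ^ (-s)) 0
      = (-1) ^ n * P s n * (x : ℂ) ^ (-s - n) := by
    intro n
    have := iteratedDeriv_cpow_shift hx0 s n hmem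
    simpa using this
  have hval : (((x : ℂ) + (α : ℂ)) ^ (-s)) = ((x + α : ℝ) : ℂ) ^ (-s) := by push_cast; ring_nf
  rw [hval] at key
  refine key.congr_fun fun n => ?_
  rw [heval n]
  have hxne : (x : ℂ) ≠ 0 := by exact_mod_cast hx0.ne'
  have hexp : (x : ℂ) ^ (-s - n) = (x : ℂ) ^ (-(s + n)) := by ring_nf
  rw [hexp]
  simp only [smul_eq_mul, sub_zero]
  rw [neg_pow]
  ring

/-- The constant `C k = Σ_m (m+k)^{-2}`. -/
noncomputable def C (k : ℕ) : ℝ := ∑' m : ℕ, ((m + k : ℕ) : ℝ) ^ (-(2 : ℝ))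

lemma summable_aux2 (k : ℕ) : Summable (fun m : ℕ => ((m + k : ℕ) : ℝ) ^ (-(2 : ℝ))) := by
  have : Summable (fun n : ℕ => (n : ℝ) ^ (-(2 : ℝ))) :=
    Real.summable_nat_rpow.mpr (by norm_num)
  exact (summable_nat_add_iff k).mpr this

lemma C_nonneg (k : ℕ) : 0 ≤ C k :=
  tsum_nonneg fun m => Real.rpow_nonneg (by positivity) _

lemma norm_R_le {k : ℕ} (hk : 1 ≤ k) {w : ℂ} (hw : 2 ≤ w.re) :
    ‖R k w‖ ≤ C k * (k : ℝ) ^ ((2 : ℝ) - w.re) := by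
  have hw1 : 1 < w.re := by linarith
  have hS := hasSum_R hk hw1
  have hknorm : ∀ m : ℕ, ‖((m + k : ℕ) : ℂ) ^ (-w)‖ = ((m + k : ℕ) : ℝ) ^ (-w.re) := by
    intro m
    rw [Complex.norm_natCast_cpow_of_pos (by omega), Complex.neg_re]
  have hterm : ∀ m : ℕ, ((m + k : ℕ) : ℝ) ^ (-w.re)
      ≤ ((m + k : ℕ) : ℝ) ^ (-(2 : ℝ)) * (k : ℝ) ^ ((2 : ℝ) - w.re) := by
    intro m
    have hbase : (0 : ℝ) < ((m + k : ℕ) : ℝ) := by positivity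
    have hkle : ((k : ℕ) : ℝ) ≤ ((m + k : ℕ) : ℝ) := by exact_mod_cast Nat.le_add_left k m
    have hkpos : (0 : ℝ) < (k : ℝ) := by exact_mod_cast hk
    have : ((m + k : ℕ) : ℝ) ^ (-w.re)
        = ((m + k : ℕ) : ℝ) ^ (-(2 : ℝ)) * ((m + k : ℕ) : ℝ) ^ ((2 : ℝ) - w.re) := by
      rw [← Real.rpow_add hbase]; ring_nf
    rw [this]
    exact mul_le_mul_of_nonneg_left
      (Real.rpow_le_rpow_of_nonpos hkpos hkle (by linarith)) (Real.rpow_nonneg hbase.le _)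
  have hnormsum : Summable (fun m : ℕ => ‖((m + k : ℕ) : ℂ) ^ (-w)‖) := by
    apply Summable.of_nonneg_of_le (fun m => norm_nonneg _) (fun m => (hknorm m ▸ hterm m))
    exact (summable_aux2 k).mul_right _
  calc ‖R k w‖ = ‖∑' m : ℕ, ((m + k : ℕ) : ℂ) ^ (-w)‖ := by rw [hS.tsum_eq]
    _ ≤ ∑' m : ℕ, ‖((m + k : ℕ) : ℂ) ^ (-w)‖ := norm_tsum_le_tsum_norm hnormsum
    _ ≤ ∑' m : ℕ, ((m + k : ℕ) : ℝ) ^ (-(2 : ℝ)) * (k : ℝ) ^ ((2 : ℝ) - w.re) := by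
        apply Summable.tsum_le_tsum _ hnormsum ((summable_aux2 k).mul_right _)
        intro m; rw [hknorm m]; exact hterm m
    _ = C k * (k : ℝ) ^ ((2 : ℝ) - w.re) := by rw [tsum_mul_right]; rfl

/-- `v R₀ k n = (α/k)^n * ∏_{j<n} (R₀+j) / n!`, the majorant sequence. -/
noncomputable def v (α R₀ : ℝ) (k : ℕ) (n : ℕ) : ℝ :=
  (α / k) ^ n * (∏ j ∈ Finset.range n, (R₀ + j)) / n.factorial

lemma v_pos {α R₀ : ℝ} {k : ℕ} (hα : 0 < α) (hk : 1 ≤ k) (hR : 0 < R₀) (n : ℕ) :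
    0 < v α R₀ k n := by
  have hkpos : (0 : ℝ) < (k : ℝ) := by exact_mod_cast hk
  have : ∀ j ∈ Finset.range n, (0 : ℝ) < R₀ + j := fun j _ => by positivity
  have hprod : 0 < ∏ j ∈ Finset.range n, (R₀ + j) := Finset.prod_pos this
  have : (0:ℝ) < (α / k) ^ n := by positivity
  unfold v; positivity

lemma summable_v {α R₀ : ℝ} {k : ℕ} (hα : 0 < α) (hα1 : α < 1) (hk : 1 ≤ k) (hR : 0 < R₀) :
    Summable (v α R₀ k) := by
  have hkpos : (0 : ℝ) < (k : ℝ) := by exact_mod_cast hk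
  have hk1 : (1 : ℝ) ≤ (k : ℝ) := by exact_mod_cast hk
  apply summable_of_ratio_test_tendsto_lt_one (l := α / k)
    (by rw [div_lt_one hkpos]; linarith)
    (Filter.Eventually.of_forall fun n => (v_pos hα hk hR n).ne')
  have hratio : ∀ n : ℕ, ‖v α R₀ k (n + 1)‖ / ‖v α R₀ k n‖
      = (α / k) * ((R₀ + n) / (n + 1)) := by
    intro n
    rw [Real.norm_eq_abs, Real.norm_eq_abs, abs_of_pos (v_pos hα hk hR _),
      abs_of_pos (v_pos hα hk hR _)]
    unfold v
    rw [Finset.prod_range_succ, Nat.factorial_succ, pow_succ]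
    field_simp
    push_cast
    ring
  simp_rw [hratio]
  have h1 : Filter.Tendsto (fun n : ℕ => (R₀ + n) / (n + 1)) atTop (nhds 1) := by
    have : (fun n : ℕ => (R₀ + n) / (n + 1)) = fun n : ℕ => (R₀ - 1) / (n + 1) + 1 := by
      funext n
      have : ((n : ℝ) + 1) ≠ 0 := by positivity
      field_simp
      ring
    rw [this]
    have h2 : Filter.Tendsto (fun n : ℕ => (R₀ - 1) / (n + 1)) atTop (nhds 0) := by
      have h3 : Filter.Tendsto (fun n : ℕ => ((n : ℝ) + 1)) atTop atTop :=
        tendsto_atTop_add_const_right _ 1 (tendsto_natCast_atTop_atTop (R := ℝ))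
      exact Filter.Tendsto.div_atTop tendsto_const_nhds h3
    simpa using h2.add tendsto_const_nhds
  have := h1.const_mul (α / k)
  simpa using this

lemma norm_coeff {α : ℝ} (hα0 : 0 < α) (n : ℕ) :
    ‖(-(α : ℂ)) ^ n / (n.factorial : ℂ)‖ = α ^ n / n.factorial := by
  rw [norm_div, norm_pow, norm_neg, Complex.norm_real, Real.norm_eq_abs, abs_of_pos hα0]
  congr 1
  rw [Complex.norm_natCast]

lemma norm_P_le {R₀ : ℝ} {s : ℂ} (hsR : ‖s‖ ≤ R₀) (n : ℕ) :
    ‖P s n‖ ≤ ∏ j ∈ Finset.range n, (R₀ + j) := by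
  rw [P]
  calc ‖∏ j ∈ Finset.range n, (s + (j : ℂ))‖ = ∏ j ∈ Finset.range n, ‖s + (j : ℂ)‖ :=
        norm_prod _ _
    _ ≤ ∏ j ∈ Finset.range n, (R₀ + j) := by
        apply Finset.prod_le_prod (fun j _ => norm_nonneg _)
        intro j _
        calc ‖s + (j : ℂ)‖ ≤ ‖s‖ + ‖(j : ℂ)‖ := norm_add_le _ _
          _ ≤ R₀ + j := by rw [Complex.norm_natCast]; linarith

lemma norm_g_le {k : ℕ} {α : ℝ} (hk : 1 ≤ k) (hα0 : 0 < α) {R₀ σ₀ : ℝ} (hR : 1 ≤ R₀)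
    {s : ℂ} (hs : σ₀ ≤ s.re) (hsR : ‖s‖ ≤ R₀) {n : ℕ} (hn : 2 ≤ σ₀ + n) :
    ‖g k α n s‖ ≤ C k * (k : ℝ) ^ ((2 : ℝ) - σ₀) * v α R₀ k n := by
  have hk1 : (1 : ℝ) ≤ (k : ℝ) := by exact_mod_cast hk
  have hkpos : (0 : ℝ) < (k : ℝ) := by linarith
  have hre : ((s + (n : ℕ) : ℂ)).re = s.re + n := by
    simp [Complex.add_re, Complex.natCast_re]
  have hw : 2 ≤ (s + (n : ℕ) : ℂ).re := by rw [hre]; linarith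
  have hRle : ‖R k (s + n)‖ ≤ C k * (k : ℝ) ^ ((2 : ℝ) - σ₀) * ((k : ℝ) ^ n)⁻¹ := by
    calc ‖R k (s + n)‖ ≤ C k * (k : ℝ) ^ ((2 : ℝ) - (s + (n : ℕ) : ℂ).re) := norm_R_le hk hw
      _ ≤ C k * (k : ℝ) ^ ((2 : ℝ) - σ₀ - n) := by
          apply mul_le_mul_of_nonneg_left _ (C_nonneg k)
          apply Real.rpow_le_rpow_of_exponent_le hk1
          rw [hre]; linarith
      _ = C k * (k : ℝ) ^ ((2 : ℝ) - σ₀) * ((k : ℝ) ^ n)⁻¹ := by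
          rw [sub_eq_add_neg ((2:ℝ) - σ₀), Real.rpow_add hkpos, mul_assoc]
          congr 1
          rw [Real.rpow_neg hkpos.le, Real.rpow_natCast]
  rw [g]
  calc ‖(-(α : ℂ)) ^ n / (n.factorial : ℂ) * P s n * R k (s + n)‖
      = (α ^ n / n.factorial) * ‖P s n‖ * ‖R k (s + n)‖ := by
        rw [norm_mul, norm_mul, norm_coeff hα0]
    _ ≤ (α ^ n / n.factorial) * (∏ j ∈ Finset.range n, (R₀ + j))
        * (C k * (k : ℝ) ^ ((2 : ℝ) - σ₀) * ((k : ℝ) ^ n)⁻¹) := by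
        apply mul_le_mul
        · apply mul_le_mul_of_nonneg_left (norm_P_le hsR n) (by positivity)
        · exact hRle
        · exact norm_nonneg _
        · have : (0:ℝ) < ∏ j ∈ Finset.range n, (R₀ + j) :=
            Finset.prod_pos fun j _ => by positivity
          positivity
    _ = C k * (k : ℝ) ^ ((2 : ℝ) - σ₀) * v α R₀ k n := by
        rw [v, div_pow]
        field_simp

lemma eventually_norm_g_le {k : ℕ} {α : ℝ} (hk : 1 ≤ k) (hα0 : 0 < α) {R₀ σ₀ : ℝ} (hR : 1 ≤ R₀)
    {W : Set ℂ} (hW : ∀ s ∈ W, σ₀ ≤ s.re ∧ ‖s‖ ≤ R₀) :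
    ∀ᶠ n in Filter.cofinite, ∀ s ∈ W,
      ‖g k α n s‖ ≤ C k * (k : ℝ) ^ ((2 : ℝ) - σ₀) * v α R₀ k n := by
  rw [Nat.cofinite_eq_atTop]
  filter_upwards [Filter.eventually_ge_atTop ⌈(2 : ℝ) - σ₀⌉₊] with n hn s hsW
  have hn2 : 2 ≤ σ₀ + n := by
    have := Nat.le_ceil ((2 : ℝ) - σ₀)
    have h2 : ((⌈(2 : ℝ) - σ₀⌉₊ : ℕ) : ℝ) ≤ (n : ℝ) := by exact_mod_cast hn
    linarith
  exact norm_g_le hk hα0 hR (hW s hsW).1 (hW s hsW).2 hn2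

lemma summable_g {k : ℕ} {α : ℝ} (hk : 1 ≤ k) (hα0 : 0 < α) (hα1 : α < 1) (s : ℂ) :
    Summable (fun n : ℕ => g k α n s) := by
  apply Summable.of_norm_bounded_eventually
    (g := fun n => C k * (k : ℝ) ^ ((2 : ℝ) - s.re) * v α (‖s‖ + 1) k n)
  · exact ((summable_v hα0 hα1 hk (by positivity)).mul_left _)
  · have h := eventually_norm_g_le (k := k) (α := α) hk hα0 (R₀ := ‖s‖ + 1) (σ₀ := s.re)
      (by linarith [norm_nonneg s]) (W := {s}) (fun t ht => by
        rw [Set.mem_singleton_iff] at ht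
        rw [ht]
        exact ⟨le_refl _, by linarith [norm_nonneg s]⟩)
    filter_upwards [h] with n hn
    exact hn s rfl

set_option maxHeartbeats 1000000 in
lemma hasSum_g_of_one_lt_re {k : ℕ} {α : ℝ} (hk : 1 ≤ k) (hα0 : 0 < α) (hα1 : α < 1)
    (hα1' : α ≤ 1) {s : ℂ} (hs1 : 1 < s.re) :
    HasSum (fun n : ℕ => g k α n s)
      (hurwitzZeta (↑α : UnitAddCircle) s - ∑ n ∈ Finset.range k, ((n : ℂ) + α) ^ (-s)) := by
  classical
  set h : ℕ × ℕ → ℂ := fun p =>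
    (-(α : ℂ)) ^ p.1 / (p.1.factorial : ℂ) * P s p.1 * ((p.2 + k : ℕ) : ℂ) ^ (-(s + p.1)) with hh
  -- row sums
  have hrow : ∀ n : ℕ, HasSum (fun m => h (n, m)) (g k α n s) := by
    intro n
    have hre : 1 < (s + (n : ℕ) : ℂ).re := by
      simp only [Complex.add_re, Complex.natCast_re]
      have : (0:ℝ) ≤ (n:ℝ) := Nat.cast_nonneg n
      linarith
    exact (hasSum_R hk hre).mul_left _
  -- column sums
  have hcol : ∀ m : ℕ, HasSum (fun n => h (n, m))
      (((((m + k : ℕ) : ℝ) + α : ℝ) : ℂ) ^ (-s)) := by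
    intro m
    have hx : (1 : ℝ) ≤ ((m + k : ℕ) : ℝ) := by exact_mod_cast Nat.one_le_iff_ne_zero.mpr (by omega)
    have := hasSum_binomial hx hα0 hα1 s
    refine this.congr_fun fun n => ?_
    simp only [hh, Complex.ofReal_natCast]
  -- summability on the product
  have hb : Summable (fun m : ℕ => ((m + k : ℕ) : ℝ) ^ (-s.re)) := by
    have : Summable (fun n : ℕ => (n : ℝ) ^ (-s.re)) :=
      Real.summable_nat_rpow.mpr (by linarith)
    exact (summable_nat_add_iff k).mpr this
  have hR1 : (1:ℝ) ≤ ‖s‖ + 1 := by linarith [norm_nonneg s]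
  have hva : Summable (v α (‖s‖ + 1) k) := summable_v hα0 hα1 hk (by linarith)
  have hsummable : Summable h := by
    apply Summable.of_norm_bounded (g := fun p : ℕ × ℕ => v α (‖s‖ + 1) k p.1
      * ((p.2 + k : ℕ) : ℝ) ^ (-s.re))
    · exact hva.mul_of_nonneg hb (fun n => (v_pos hα0 hk (by linarith) n).le)
        (fun m => Real.rpow_nonneg (by positivity) _)
    · rintro ⟨n, m⟩
      have hkpos : (0:ℕ) < m + k := by omega
      have hbase : (0:ℝ) < ((m + k : ℕ) : ℝ) := by exact_mod_cast hkpos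
      have hnorm : ‖h (n, m)‖ = (α ^ n / n.factorial) * ‖P s n‖
          * ((m + k : ℕ) : ℝ) ^ (-(s.re + n)) := by
        rw [hh]
        simp only
        rw [norm_mul, norm_mul, norm_coeff hα0, Complex.norm_natCast_cpow_of_pos hkpos]
        congr 2
      rw [hnorm]
      have hsplit : ((m + k : ℕ) : ℝ) ^ (-(s.re + (n:ℝ)))
          = ((m + k : ℕ) : ℝ) ^ (-s.re) * (((m + k : ℕ) : ℝ) ^ n)⁻¹ := by
        rw [neg_add, Real.rpow_add hbase]
        congr 1
        rw [Real.rpow_neg hbase.le, Real.rpow_natCast]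
      rw [hsplit]
      have hkk : ((k:ℕ) : ℝ) ≤ ((m + k : ℕ) : ℝ) := by exact_mod_cast Nat.le_add_left k m
      have hkpos' : (0:ℝ) < (k:ℝ) := by exact_mod_cast hk
      have hinv : (((m + k : ℕ) : ℝ) ^ n)⁻¹ ≤ (((k:ℕ) : ℝ) ^ n)⁻¹ := by
        apply inv_anti₀ (by positivity)
        exact pow_le_pow_left₀ hkpos'.le hkk n
      calc (α ^ n / n.factorial) * ‖P s n‖ * (((m + k : ℕ) : ℝ) ^ (-s.re)
            * (((m + k : ℕ) : ℝ) ^ n)⁻¹)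
          ≤ (α ^ n / n.factorial) * (∏ j ∈ Finset.range n, ((‖s‖ + 1) + j))
            * (((m + k : ℕ) : ℝ) ^ (-s.re) * (((k:ℕ) : ℝ) ^ n)⁻¹) := by
            apply mul_le_mul
            · exact mul_le_mul_of_nonneg_left (norm_P_le (by linarith) n) (by positivity)
            · exact mul_le_mul_of_nonneg_left hinv (Real.rpow_nonneg hbase.le _)
            · positivity
            · have : (0:ℝ) < ∏ j ∈ Finset.range n, ((‖s‖ + 1) + j) :=
                Finset.prod_pos fun j _ => by positivity
              positivity
        _ = v α (‖s‖ + 1) k n * ((m + k : ℕ) : ℝ) ^ (-s.re) := by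
            rw [v, div_pow]
            field_simp
  -- Fubini
  have H1 : HasSum (fun n : ℕ => g k α n s) (∑' p, h p) :=
    hsummable.hasSum.prod_fiberwise hrow
  have Hswap : HasSum (fun p : ℕ × ℕ => h (p.2, p.1)) (∑' p, h p) := by
    have := (Equiv.prodComm ℕ ℕ).hasSum_iff (f := h) (a := ∑' p, h p)
    exact this.mpr hsummable.hasSum
  have H2 : HasSum (fun m : ℕ => ((((m + k : ℕ) : ℝ) + α : ℝ) : ℂ) ^ (-s)) (∑' p, h p) :=
    Hswap.prod_fiberwise hcol
  -- Hurwitz side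
  have Hhz : HasSum (fun n : ℕ => ((n : ℂ) + α) ^ (-s)) (hurwitzZeta (↑α : UnitAddCircle) s) := by
    have h0 := hasSum_hurwitzZeta_of_one_lt_re (a := α) ⟨hα0.le, hα1'⟩ hs1
    refine h0.congr_fun fun n => ?_
    simp [cpow_neg, one_div]
  have H3 : HasSum (fun m : ℕ => (((m + k : ℕ) : ℂ) + α) ^ (-s))
      (hurwitzZeta (↑α : UnitAddCircle) s - ∑ n ∈ Finset.range k, ((n : ℂ) + α) ^ (-s)) := by
    rw [hasSum_nat_add_iff (f := fun n : ℕ => ((n : ℂ) + α) ^ (-s)) k, sub_add_cancel]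
    exact Hhz
  have hcongr : (fun m : ℕ => ((((m + k : ℕ) : ℝ) + α : ℝ) : ℂ) ^ (-s))
      = fun m : ℕ => (((m + k : ℕ) : ℂ) + α) ^ (-s) := by
    funext m; push_cast; ring_nf
  rw [hcongr] at H2
  rwa [H2.unique H3] at H1

/-- The domain: complement of integers `≤ 1`. -/
def U : Set ℂ := {s : ℂ | ∀ n : ℤ, n ≤ 1 → s ≠ (n : ℂ)}

lemma U_eq : U = (((↑) : ℤ → ℂ) '' Set.Iic 1)ᶜ := by
  ext s
  simp only [U, Set.mem_setOf_eq, Set.mem_compl_iff, Set.mem_image, Set.mem_Iic, not_exists,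
    not_and]
  constructor
  · intro h n hn heq
    exact h n hn heq.symm
  · intro h n hn heq
    exact h n hn heq.symm

lemma isOpen_U : IsOpen U := by
  rw [U_eq]
  exact (Complex.closedEmbedding_intCast.isClosedMap _ (isClosed_discrete _)).isOpen_compl

lemma isPreconnected_U : IsPreconnected U := by
  rw [U_eq]
  exact ((Set.to_countable _).image _ |>.isConnected_compl_of_one_lt_rank
    (by rw [rank_real_complex]; norm_num)).isPreconnected

lemma mem_U_of_one_lt_re {s : ℂ} (hs : 1 < s.re) : s ∈ U := by
  intro n hn heq
  rw [heq] at hs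
  simp only [Complex.intCast_re] at hs
  have : (1 : ℝ) < (n : ℝ) := hs
  exact absurd (by exact_mod_cast this : (1:ℤ) < n) (not_lt.mpr hn)

lemma ne_one_of_mem_U {s : ℂ} (hs : s ∈ U) {n : ℤ} (hn : n ≤ 1) : s ≠ (n : ℂ) := hs n hn

lemma differentiableOn_g_term {k : ℕ} {α : ℝ} (n : ℕ) {V : Set ℂ} (hV : V ⊆ U) :
    DifferentiableOn ℂ (g k α n) V := by
  intro z hz
  apply DifferentiableAt.differentiableWithinAt
  have h1 : DifferentiableAt ℂ (fun s : ℂ => (-(α : ℂ)) ^ n / (n.factorial : ℂ) * P s n) z := by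
    apply DifferentiableAt.const_mul
    apply DifferentiableAt.fun_finsetProd
    intro j _
    exact differentiableAt_id.add_const _
  apply h1.mul
  apply DifferentiableAt.sub
  · have hne : z + (n : ℕ) ≠ 1 := by
      intro hcontra
      have : z = ((1 - (n : ℤ) : ℤ) : ℂ) := by push_cast; linear_combination hcontra
      exact ne_one_of_mem_U (hV hz) (by omega) this
    exact (differentiableAt_riemannZeta hne).comp z (differentiableAt_id.add_const _)
  · apply DifferentiableAt.fun_sum
    intro ℓ hℓ
    have hℓ1 : 1 ≤ ℓ := (Finset.mem_Icc.mp hℓ).1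
    have hℓ0 : (ℓ : ℂ) ≠ 0 := by exact_mod_cast Nat.one_le_iff_ne_zero.mp hℓ1
    exact DifferentiableAt.const_cpow ((differentiableAt_id.add_const _).neg) (Or.inl hℓ0)

lemma differentiableOn_G {k : ℕ} {α : ℝ} (hk : 1 ≤ k) (hα0 : 0 < α) (hα1 : α < 1) :
    DifferentiableOn ℂ (fun s => ∑' n : ℕ, g k α n s) U := by
  intro s₀ hs₀
  set V := Metric.ball s₀ 1 ∩ U with hV
  have hVopen : IsOpen V := Metric.isOpen_ball.inter isOpen_U
  have hVU : V ⊆ U := Set.inter_subset_right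
  have hs₀V : s₀ ∈ V := ⟨Metric.mem_ball_self one_pos, hs₀⟩
  have hbounds : ∀ s ∈ V, s₀.re - 1 ≤ s.re ∧ ‖s‖ ≤ ‖s₀‖ + 1 := by
    rintro s ⟨hs1, -⟩
    rw [Metric.mem_ball, dist_eq_norm] at hs1
    constructor
    · have h1 : |(s - s₀).re| ≤ ‖s - s₀‖ := Complex.abs_re_le_norm _
      have h2 := (abs_le.mp h1).1
      simp only [Complex.sub_re] at h2
      linarith
    · calc ‖s‖ = ‖s₀ + (s - s₀)‖ := by ring_nf
        _ ≤ ‖s₀‖ + ‖s - s₀‖ := norm_add_le _ _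
        _ ≤ ‖s₀‖ + 1 := by linarith
  have hR1 : (1 : ℝ) ≤ ‖s₀‖ + 1 := by linarith [norm_nonneg s₀]
  have hu : Summable (fun n => C k * (k : ℝ) ^ ((2 : ℝ) - (s₀.re - 1)) * v α (‖s₀‖ + 1) k n) :=
    (summable_v hα0 hα1 hk (by linarith)).mul_left _
  have hUnif := tendstoUniformlyOn_tsum_of_cofinite_eventually (s := V) hu
    (eventually_norm_g_le hk hα0 hR1 hbounds)
  have hdiff : DifferentiableOn ℂ (fun s => ∑' n : ℕ, g k α n s) V := by
    apply TendstoLocallyUniformlyOn.differentiableOn hUnif.tendstoLocallyUniformlyOn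
      _ hVopen
    apply Filter.Eventually.of_forall
    intro t
    exact DifferentiableOn.fun_sum fun n _ => differentiableOn_g_term n hVU
  exact ((hdiff.differentiableAt (hVopen.mem_nhds hs₀V))).differentiableWithinAt

lemma differentiableOn_F1 {k : ℕ} {α : ℝ} (hα0 : 0 < α) :
    DifferentiableOn ℂ
      (fun s => hurwitzZeta (↑α : UnitAddCircle) s - ∑ n ∈ Finset.range k, ((n : ℂ) + α) ^ (-s))
      U := by
  intro z hz
  apply DifferentiableAt.differentiableWithinAt
  apply DifferentiableAt.sub
  · exact differentiableAt_hurwitzZeta _ (by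
      have := ne_one_of_mem_U hz (n := 1) le_rfl
      simpa using this)
  · apply DifferentiableAt.fun_sum
    intro n _
    have hne : ((n : ℂ) + α) ≠ 0 := by
      intro hcontra
      have := congrArg Complex.re hcontra
      simp only [Complex.add_re, Complex.natCast_re, Complex.ofReal_re, Complex.zero_re] at this
      have hn : (0:ℝ) ≤ (n:ℝ) := Nat.cast_nonneg n
      linarith
    exact DifferentiableAt.const_cpow (differentiableAt_id.neg) (Or.inl hne)

lemma main_eq {k : ℕ} {α : ℝ} (hk : 1 ≤ k) (hα0 : 0 < α) (hα1 : α < 1) {s : ℂ} (hs : s ∈ U) :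
    hurwitzZeta (↑α : UnitAddCircle) s - ∑ n ∈ Finset.range k, ((n : ℂ) + α) ^ (-s)
      = ∑' n : ℕ, g k α n s := by
  have hF1 : AnalyticOnNhd ℂ
      (fun s => hurwitzZeta (↑α : UnitAddCircle) s - ∑ n ∈ Finset.range k, ((n : ℂ) + α) ^ (-s))
      U := (differentiableOn_F1 hα0).analyticOnNhd isOpen_U
  have hF2 : AnalyticOnNhd ℂ (fun s => ∑' n : ℕ, g k α n s) U :=
    (differentiableOn_G hk hα0 hα1).analyticOnNhd isOpen_U
  have h2U : (2 : ℂ) ∈ U := mem_U_of_one_lt_re (by norm_num)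
  have hopen : IsOpen {z : ℂ | 1 < z.re} := isOpen_lt continuous_const Complex.continuous_re
  have heq₀ : Set.EqOn
      (fun s => hurwitzZeta (↑α : UnitAddCircle) s - ∑ n ∈ Finset.range k, ((n : ℂ) + α) ^ (-s))
      (fun s => ∑' n : ℕ, g k α n s) {z : ℂ | 1 < z.re} := by
    intro z hz
    exact ((hasSum_g_of_one_lt_re hk hα0 hα1 hα1.le hz).tsum_eq).symm
  have hev := Filter.eventuallyEq_of_mem (hopen.mem_nhds (by norm_num : (2:ℂ) ∈ {z : ℂ | 1 < z.re}))
    heq₀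
  exact hF1.eqOn_of_preconnected_of_eventuallyEq hF2 isPreconnected_U h2U hev hs

end HZAux

set_option maxHeartbeats 1000000 in
/-- Proposition 1: for `k ≥ 1`, `0 < α < 1`, and `s` not an integer `≤ 1`, the series
converges and
`ζ(s, α) = Σ_{n=0}^{k−1} (n+α)^{−s} + (ζ(s) − Σ_{ℓ=1}^{k−1} ℓ^{−s})
  + Σ_{n≥1} ((−α)^n/n!) (s)_n (ζ(s+n) − Σ_{ℓ=1}^{k−1} ℓ^{−(s+n)})`. -/
theorem hurwitzZeta_eq_series (k : ℕ) (hk : 1 ≤ k) (α : ℝ) (hα0 : 0 < α) (hα1 : α < 1)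
    (s : ℂ) (hs : ∀ n : ℤ, n ≤ 1 → s ≠ (n : ℂ)) :
    Summable (fun n : ℕ =>
        (-(α : ℂ)) ^ (n + 1) / ((n + 1).factorial : ℂ) * (∏ j ∈ Finset.range (n + 1), (s + j)) *
          (riemannZeta (s + (n + 1)) -
            ∑ ℓ ∈ Finset.Icc 1 (k - 1), (ℓ : ℂ) ^ (-(s + (n + 1))))) ∧
      hurwitzZeta (α : UnitAddCircle) s =
        (∑ n ∈ Finset.range k, ((n : ℂ) + α) ^ (-s)) +
          (riemannZeta s - ∑ ℓ ∈ Finset.Icc 1 (k - 1), (ℓ : ℂ) ^ (-s)) +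
          ∑' n : ℕ,
            (-(α : ℂ)) ^ (n + 1) / ((n + 1).factorial : ℂ) * (∏ j ∈ Finset.range (n + 1), (s + j)) *
              (riemannZeta (s + (n + 1)) -
                ∑ ℓ ∈ Finset.Icc 1 (k - 1), (ℓ : ℂ) ^ (-(s + (n + 1)))) := by
  have hsU : s ∈ HZAux.U := hs
  have hsum : Summable (fun n : ℕ => HZAux.g k α n s) := HZAux.summable_g hk hα0 hα1 s
  have hterm : ∀ n : ℕ, HZAux.g k α (n + 1) s
      = (-(α : ℂ)) ^ (n + 1) / ((n + 1).factorial : ℂ) * (∏ j ∈ Finset.range (n + 1), (s + j)) *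
          (riemannZeta (s + (n + 1)) -
            ∑ ℓ ∈ Finset.Icc 1 (k - 1), (ℓ : ℂ) ^ (-(s + (n + 1)))) := by
    intro n
    rw [HZAux.g, HZAux.P, HZAux.R]
    push_cast
    ring_nf
  have htail : Summable (fun n : ℕ => HZAux.g k α (n + 1) s) :=
    (summable_nat_add_iff 1).mpr hsum
  constructor
  · exact htail.congr fun n => hterm n
  · have hmain := HZAux.main_eq hk hα0 hα1 hsU
    have hzero : HZAux.g k α 0 s
        = riemannZeta s - ∑ ℓ ∈ Finset.Icc 1 (k - 1), (ℓ : ℂ) ^ (-s) := by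
      rw [HZAux.g, HZAux.P, HZAux.R]
      simp
    have hsplit : ∑' n : ℕ, HZAux.g k α n s
        = HZAux.g k α 0 s + ∑' n : ℕ, HZAux.g k α (n + 1) s := hsum.tsum_eq_zero_add
    have : hurwitzZeta (α : UnitAddCircle) s
        = (∑ n ∈ Finset.range k, ((n : ℂ) + α) ^ (-s)) + ∑' n : ℕ, HZAux.g k α n s := by
      linear_combination hmain
    rw [this, hsplit, hzero, tsum_congr hterm, add_assoc]
end

section
/- For all integers m ≥ 1 and q ≥ 2, ζ(−2m, 1/q) = ((−1)^m · (2m)! / (2^{2m} · π^{2m+1})) · Σ_{n=1}^{∞} sin(2πn/q) / n^{2m+1}, where the series converges absolutely. -/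
open Complex Real HurwitzZeta

/-- Proposition 4 I): for integers `m ≥ 1` and `q ≥ 2`,
`ζ(−2m, 1/q) = ((−1)^m (2m)!/(2^{2m} π^{2m+1})) Σ_{n≥1} sin(2πn/q)/n^{2m+1}`,
and the series converges absolutely. -/
theorem hurwitzZeta_neg_two_mul_inv_q (m : ℕ) (hm : 1 ≤ m) (q : ℕ) (hq : 2 ≤ q) :
    Summable (fun n : ℕ =>
        |Real.sin (2 * π * (n + 1) / q)| / ((n : ℝ) + 1) ^ (2 * m + 1)) ∧
      hurwitzZeta ((1 / q : ℝ) : UnitAddCircle) (-(2 * m : ℂ)) =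
        ((-1 : ℂ) ^ m * ((2 * m).factorial : ℂ) / (2 ^ (2 * m) * (π : ℂ) ^ (2 * m + 1))) *
          ∑' n : ℕ, ((Real.sin (2 * π * (n + 1) / q) / ((n : ℝ) + 1) ^ (2 * m + 1) : ℝ) : ℂ) := by
  constructor
  · have hsummable : Summable (fun n : ℕ => 1 / ((n : ℝ) + 1) ^ (2 * m + 1)) := by
      have h1 : Summable (fun n : ℕ => 1 / (n : ℝ) ^ (2 * m + 1)) :=
        Real.summable_one_div_nat_pow.mpr (by omega)
      have := (summable_nat_add_iff 1).mpr h1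
      simpa using this
    refine Summable.of_nonneg_of_le (fun n => by positivity) (fun n => ?_) hsummable
    gcongr
    exact abs_sin_le_one _
  · -- main equality
    set S : ℕ := 2 * m + 1 with hS
    have hre : 1 < Complex.re (S : ℂ) := by
      simp only [Complex.natCast_re]
      exact_mod_cast (by omega : 1 < S)
    have hsne : ∀ n : ℕ, (S : ℂ) ≠ -n := fun n h => by
      have : (S : ℂ) + n = 0 := by rw [h]; ring
      rw [← Nat.cast_add] at this
      simp only [Nat.cast_eq_zero] at this
      omega
    -- even part vanishes
    have heven : hurwitzZetaEven ((1 / q : ℝ) : UnitAddCircle) (-(2 * m : ℂ)) = 0 := by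
      obtain ⟨k, rfl⟩ := Nat.exists_eq_succ_of_ne_zero (by omega : m ≠ 0)
      simpa only [Nat.cast_succ, ← neg_mul, Nat.cast_mul, Nat.cast_ofNat] using
        hurwitzZetaEven_neg_two_mul_nat_add_one ((1 / q : ℝ) : UnitAddCircle) k
    have hsub : -(2 * m : ℂ) = 1 - (S : ℂ) := by push_cast [hS]; ring
    rw [hurwitzZeta, heven, zero_add, hsub,
      hurwitzZetaOdd_one_sub _ hsne]
    -- compute the tsum as sinZeta
    have hsum := hasSum_nat_sinZeta (1 / q : ℝ) (s := (S : ℂ)) hre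
    have hzero : Real.sin (2 * π * (1 / q) * (0 : ℕ)) / ((0 : ℕ) : ℂ) ^ (S : ℂ) = 0 := by
      simp
    have htsum : sinZeta ((1 / q : ℝ) : UnitAddCircle) (S : ℂ) =
        ∑' n : ℕ, ((Real.sin (2 * π * (n + 1) / q) / ((n : ℝ) + 1) ^ (2 * m + 1) : ℝ) : ℂ) := by
      rw [← hsum.tsum_eq, hsum.summable.tsum_eq_zero_add, hzero, zero_add]
      congr 1
      funext n
      rw [Complex.ofReal_div]
      congr 1
      · congr 2
        push_cast
        ring
      · push_cast [hS]
        rw [show ((n : ℂ) + 1) ^ ((2 * (m : ℂ) + 1)) = ((n : ℂ) + 1) ^ ((S : ℕ) : ℂ) by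
            push_cast [hS]; ring_nf,
          Complex.cpow_natCast]
    rw [htsum]
    -- compute the prefactor
    have hGamma : Complex.Gamma (S : ℂ) = ((2 * m).factorial : ℂ) := by
      rw [hS, show ((2 * m + 1 : ℕ) : ℂ) = ((2 * m : ℕ) : ℂ) + 1 by push_cast; ring,
        Complex.Gamma_nat_eq_factorial]
    have hsin : Complex.sin (π * (S : ℂ) / 2) = ((-1 : ℂ)) ^ m := by
      have : (π : ℂ) * (S : ℂ) / 2 = (((m : ℝ) * π + π / 2 : ℝ) : ℂ) := by
        push_cast [hS]; ring
      rw [this, ← Complex.ofReal_sin, Real.sin_add_pi_div_two, ← sub_zero ((m : ℝ) * π),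
        Real.cos_nat_mul_pi_sub, Real.cos_zero, mul_one]
      push_cast
      ring
    have hpow : (2 * (π : ℂ)) ^ (-(S : ℂ)) = ((2 * (π : ℂ)) ^ S)⁻¹ := by
      rw [Complex.cpow_neg, Complex.cpow_natCast]
    rw [hGamma, hsin, hpow]
    have hπ : (π : ℂ) ≠ 0 := Complex.ofReal_ne_zero.mpr Real.pi_ne_zero
    have h2π : (2 * (π : ℂ)) ^ S ≠ 0 := pow_ne_zero _ (by simp [hπ])
    field_simp [hS]
    ring
end
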